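/- Let (B_n) be a sequence of events such that ∑ P(B_n) = ∞ and there is a constant c ∈ (0,1] with P(B_n ∩ B_m) ≤ P(B_n)P(B_m)/c² for all n ≠ m. Then P(limsup_n B_n) ≥ c². -/

import Mathlib

open MeasureTheory ProbabilityTheory Filter Set
open scoped ENNReal NNReal Topology
noncomputable section

/-- Chung–Erdős / Cauchy–Schwarz inequality for a finite family of sets:
`(∑ μ (B k))² ≤ (∑ⱼ ∑ₖ μ (B j ∩ B k)) * μ (⋃ B k)`. -/
lemma chung_erdos_aux {Ω : Type*} [MeasurableSpace Ω] (μ : Measure Ω)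
    (B : ℕ → Set Ω) (hB : ∀ n, MeasurableSet (B n)) (s : Finset ℕ) :
    (∑ k ∈ s, μ (B k)) ^ 2 ≤
      (∑ j ∈ s, ∑ k ∈ s, μ (B j ∩ B k)) * μ (⋃ k ∈ s, B k) := by
  classical
  set f : Ω → ℝ≥0∞ := fun ω => ∑ k ∈ s, (B k).indicator 1 ω with hf_def
  set U : Set Ω := ⋃ k ∈ s, B k with hU_def
  have hUmeas : MeasurableSet U := .biUnion s.countable_toSet fun k _ => hB k
  have hindm : ∀ k : ℕ, Measurable ((B k).indicator (1 : Ω → ℝ≥0∞)) := fun k =>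
    measurable_one.indicator (hB k)
  have hfm : Measurable f := Finset.measurable_sum _ fun k _ => hindm k
  -- first moment
  have hf1 : ∫⁻ ω, f ω ∂μ = ∑ k ∈ s, μ (B k) := by
    rw [hf_def, lintegral_finset_sum _ fun k _ => hindm k]
    simp [lintegral_indicator_one (hB _)]
  -- second moment
  have hsq : ∀ ω, f ω ^ 2 = ∑ j ∈ s, ∑ k ∈ s, (B j ∩ B k).indicator (1 : Ω → ℝ≥0∞) ω := by
    intro ω
    rw [hf_def, sq, Finset.sum_mul_sum]
    refine Finset.sum_congr rfl fun j _ => Finset.sum_congr rfl fun k _ => ?_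
    simp [Set.inter_indicator_one]
  have hf2 : ∫⁻ ω, f ω ^ 2 ∂μ = ∑ j ∈ s, ∑ k ∈ s, μ (B j ∩ B k) := by
    simp_rw [hsq]
    rw [lintegral_finset_sum _ fun j _ =>
      Finset.measurable_sum _ fun k _ => measurable_one.indicator ((hB j).inter (hB k))]
    refine Finset.sum_congr rfl fun j _ => ?_
    rw [lintegral_finset_sum _ fun k _ => measurable_one.indicator ((hB j).inter (hB k))]
    simp [lintegral_indicator_one ((hB _).inter (hB _))]
  -- f vanishes outside U
  have hsupp : ∀ ω, f ω = (U.indicator (1 : Ω → ℝ≥0∞) * f) ω := by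
    intro ω
    by_cases h : ω ∈ U
    · simp [Set.indicator_of_mem h]
    · have : f ω = 0 := by
        rw [hf_def]
        refine Finset.sum_eq_zero fun k hk => ?_
        exact Set.indicator_of_notMem (fun hω => h (Set.mem_biUnion hk hω)) _
      simp [Set.indicator_of_notMem h, this]
  -- Cauchy–Schwarz (Hölder with p = q = 2)
  have hpq : Real.HolderConjugate 2 2 := Real.HolderConjugate.two_two
  have hCS := ENNReal.lintegral_mul_le_Lp_mul_Lq μ hpq
    (measurable_one.indicator hUmeas).aemeasurable hfm.aemeasurable
  have hind_rpow : ∀ ω, (U.indicator (1 : Ω → ℝ≥0∞) ω) ^ (2 : ℝ) =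
      U.indicator (1 : Ω → ℝ≥0∞) ω := by
    intro ω
    by_cases h : ω ∈ U
    · simp [Set.indicator_of_mem h]
    · simp [Set.indicator_of_notMem h, ENNReal.zero_rpow_of_pos]
  have hf_rpow : ∀ ω, f ω ^ (2 : ℝ) = f ω ^ (2 : ℕ) := by
    intro ω
    rw [← ENNReal.rpow_natCast (f ω) 2]
    norm_num
  have hCS' : ∑ k ∈ s, μ (B k) ≤
      (μ U) ^ (1 / 2 : ℝ) * (∑ j ∈ s, ∑ k ∈ s, μ (B j ∩ B k)) ^ (1 / 2 : ℝ) := by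
    calc ∑ k ∈ s, μ (B k) = ∫⁻ ω, f ω ∂μ := hf1.symm
      _ = ∫⁻ ω, (U.indicator (1 : Ω → ℝ≥0∞) * f) ω ∂μ := by
          exact lintegral_congr fun ω => hsupp ω
      _ ≤ (∫⁻ ω, (U.indicator (1 : Ω → ℝ≥0∞) ω) ^ (2 : ℝ) ∂μ) ^ (1 / 2 : ℝ) *
            (∫⁻ ω, f ω ^ (2 : ℝ) ∂μ) ^ (1 / 2 : ℝ) := hCS
      _ = (μ U) ^ (1 / 2 : ℝ) * (∑ j ∈ s, ∑ k ∈ s, μ (B j ∩ B k)) ^ (1 / 2 : ℝ) := by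
          congr 1
          · congr 1
            simp_rw [hind_rpow]
            exact lintegral_indicator_one hUmeas
          · congr 1
            simp_rw [hf_rpow]
            exact hf2
  calc (∑ k ∈ s, μ (B k)) ^ 2
      ≤ ((μ U) ^ (1 / 2 : ℝ) * (∑ j ∈ s, ∑ k ∈ s, μ (B j ∩ B k)) ^ (1 / 2 : ℝ)) ^ 2 := by
        rw [sq, sq]; exact mul_le_mul' hCS' hCS'
    _ = (∑ j ∈ s, ∑ k ∈ s, μ (B j ∩ B k)) * μ U := by
        rw [mul_pow, ← ENNReal.rpow_natCast ((μ U) ^ (1 / 2 : ℝ)) 2,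
          ← ENNReal.rpow_natCast ((∑ j ∈ s, ∑ k ∈ s, μ (B j ∩ B k)) ^ (1 / 2 : ℝ)) 2,
          ← ENNReal.rpow_mul, ← ENNReal.rpow_mul]
        norm_num
        rw [mul_comm]

/-- Extension of the Borel–Cantelli lemma: if `∑ P(B n) = ∞` and
`P(B n ∩ B m) ≤ P(B n) P(B m) / c²` for all `n ≠ m`, with `c ∈ (0,1]`,
then `P(limsup B n) ≥ c²`. -/
theorem borel_cantelli_extension
    {Ω : Type*} [MeasurableSpace Ω] (μ : Measure Ω) [IsProbabilityMeasure μ]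
    (B : ℕ → Set Ω) (hBmeas : ∀ n, MeasurableSet (B n))
    (c : ℝ) (hc0 : 0 < c) (hc1 : c ≤ 1)
    (hdiv : ∑' n, μ (B n) = ⊤)
    (hcorr : ∀ n m, n ≠ m →
      μ (B n ∩ B m) ≤ μ (B n) * μ (B m) / ENNReal.ofReal (c ^ 2)) :
    ENNReal.ofReal (c ^ 2) ≤ μ (Filter.limsup B Filter.atTop) := by
  classical
  set γ : ℝ≥0∞ := ENNReal.ofReal (c ^ 2) with hγ_def
  have hγ0 : γ ≠ 0 := by
    rw [hγ_def]
    simp only [ne_eq, ENNReal.ofReal_eq_zero, not_le]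
    positivity
  have hγtop : γ ≠ ⊤ := ENNReal.ofReal_ne_top
  set A : ℕ → Set Ω := fun N => ⋃ i, ⋃ (_ : N ≤ i), B i with hA_def
  have hAmeas : ∀ N, MeasurableSet (A N) :=
    fun N => MeasurableSet.iUnion fun i => MeasurableSet.iUnion fun _ => hBmeas i
  have hAanti : Antitone A := by
    intro N M hNM
    show (⋃ i, ⋃ (_ : M ≤ i), B i) ⊆ ⋃ i, ⋃ (_ : N ≤ i), B i
    exact Set.iUnion₂_subset fun i hi =>
      Set.subset_iUnion₂ (s := fun i (_ : N ≤ i) => B i) i (hNM.trans hi)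
  -- the key lower bound for each tail union
  have hA : ∀ N, γ ≤ μ (A N) := by
    intro N
    set S : ℕ → ℝ≥0∞ := fun m => ∑ i ∈ Finset.range m, μ (B (N + i)) with hS_def
    have hSne : ∀ m, S m ≠ ⊤ := fun m =>
      (ENNReal.sum_lt_top.2 fun i _ => measure_lt_top μ _).ne
    -- S tends to ⊤
    have hStop : Tendsto S atTop (𝓝 ⊤) := by
      set C : ℝ≥0∞ := ∑ i ∈ Finset.range N, μ (B i) with hC_def
      have hC : C ≠ ⊤ := (ENNReal.sum_lt_top.2 fun i _ => measure_lt_top μ _).ne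
      have h0 : Tendsto (fun n => ∑ i ∈ Finset.range n, μ (B i)) atTop (𝓝 ⊤) := by
        have := ENNReal.tendsto_nat_tsum (fun n => μ (B n))
        rwa [hdiv] at this
      have h1 : Tendsto (fun m => ∑ i ∈ Finset.range (N + m), μ (B i)) atTop (𝓝 ⊤) := by
        have := h0.comp (tendsto_add_atTop_nat N)
        refine this.congr fun m => ?_
        simp only [Function.comp]
        rw [add_comm]
      have hsplit : ∀ m, ∑ i ∈ Finset.range (N + m), μ (B i) = C + S m := fun m =>
        Finset.sum_range_add (fun i => μ (B i)) N m
      rw [ENNReal.tendsto_nhds_top_iff_nnreal]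
      intro x
      have hx : (x : ℝ≥0∞) + C < ⊤ := ENNReal.add_lt_top.2 ⟨ENNReal.coe_lt_top,
        lt_top_iff_ne_top.2 hC⟩
      filter_upwards [h1.eventually (lt_mem_nhds hx)] with m hm
      rw [hsplit m, add_comm (x : ℝ≥0∞) C] at hm
      exact (ENNReal.add_lt_add_iff_left hC).mp hm
    set p : ℝ≥0∞ := μ (A N) with hp_def
    have hpne : p ≠ ⊤ := measure_ne_top μ _
    -- key inequality for each m
    have key : ∀ m, S m ^ 2 ≤ (S m + S m * (S m * γ⁻¹)) * p := by
      intro m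
      have hCE := chung_erdos_aux μ (fun i => B (N + i)) (fun i => hBmeas _)
        (Finset.range m)
      have hUsub : (⋃ k ∈ Finset.range m, B (N + k)) ⊆ A N := by
        refine Set.iUnion₂_subset fun k _ => ?_
        exact Set.subset_iUnion₂ (s := fun i (_ : N ≤ i) => B i) (N + k) (Nat.le_add_right N k)
      have hD : ∑ j ∈ Finset.range m, ∑ k ∈ Finset.range m, μ (B (N + j) ∩ B (N + k)) ≤
          S m + S m * (S m * γ⁻¹) := by
        have hterm : ∀ j ∈ Finset.range m, ∀ k ∈ Finset.range m,
            μ (B (N + j) ∩ B (N + k)) ≤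
              (if j = k then μ (B (N + j)) else 0) + μ (B (N + j)) * μ (B (N + k)) * γ⁻¹ := by
          intro j _ k _
          by_cases h : j = k
          · subst h
            simp only [if_pos rfl, Set.inter_self]
            exact le_self_add
          · rw [if_neg h, zero_add]
            have := hcorr (N + j) (N + k) (fun hc => h (Nat.add_left_cancel hc))
            rwa [div_eq_mul_inv] at this
        calc ∑ j ∈ Finset.range m, ∑ k ∈ Finset.range m, μ (B (N + j) ∩ B (N + k))
            ≤ ∑ j ∈ Finset.range m, ∑ k ∈ Finset.range m,
              ((if j = k then μ (B (N + j)) else 0) +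
                μ (B (N + j)) * μ (B (N + k)) * γ⁻¹) := by
              exact Finset.sum_le_sum fun j hj => Finset.sum_le_sum fun k hk =>
                hterm j hj k hk
          _ = S m + S m * (S m * γ⁻¹) := by
              simp_rw [Finset.sum_add_distrib]
              congr 1
              · rw [hS_def]
                refine Finset.sum_congr rfl fun j hj => ?_
                simp [Finset.sum_ite_eq, hj]
              · rw [hS_def]
                simp_rw [mul_assoc, ← Finset.mul_sum, ← Finset.sum_mul]
        -- end calc
      calc S m ^ 2 ≤ (∑ j ∈ Finset.range m, ∑ k ∈ Finset.range m, μ (B (N + j) ∩ B (N + k))) *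
            μ (⋃ k ∈ Finset.range m, B (N + k)) := hCE
        _ ≤ (S m + S m * (S m * γ⁻¹)) * p := mul_le_mul' hD (measure_mono hUsub)
    -- pass to the limit
    have h1 : ∀ᶠ m in atTop, (1 : ℝ≥0∞) ≤ ((S m)⁻¹ + γ⁻¹) * p := by
      filter_upwards [hStop.eventually (lt_mem_nhds (show (1 : ℝ≥0∞) < ⊤ by simp))] with m hm
      have hS0 : S m ≠ 0 := fun h => by simp [h] at hm
      have hSS0 : S m * S m ≠ 0 := mul_ne_zero hS0 hS0
      have hSStop : S m * S m ≠ ⊤ := ENNReal.mul_ne_top (hSne m) (hSne m)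
      have hrw : S m + S m * (S m * γ⁻¹) = S m * S m * ((S m)⁻¹ + γ⁻¹) := by
        rw [mul_add]
        congr 1
        · rw [mul_assoc, ENNReal.mul_inv_cancel hS0 (hSne m), mul_one]
        · ring
      have hk := key m
      rw [sq, hrw, mul_assoc] at hk
      have : S m * S m * 1 ≤ S m * S m * (((S m)⁻¹ + γ⁻¹) * p) := by
        rwa [mul_one]
      exact (ENNReal.mul_le_mul_iff_right hSS0 hSStop).mp this
    have h2 : Tendsto (fun m => ((S m)⁻¹ + γ⁻¹) * p) atTop (𝓝 (γ⁻¹ * p)) := by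
      have hinv : Tendsto (fun m => (S m)⁻¹) atTop (𝓝 (0 : ℝ≥0∞)) := by
        have := ENNReal.tendsto_inv_iff.2 hStop
        rwa [ENNReal.inv_top] at this
      have hadd : Tendsto (fun m => (S m)⁻¹ + γ⁻¹) atTop (𝓝 γ⁻¹) := by
        have := hinv.add (tendsto_const_nhds (x := γ⁻¹))
        rwa [zero_add] at this
      exact ENNReal.Tendsto.mul_const hadd (Or.inr hpne)
    have h3 : (1 : ℝ≥0∞) ≤ γ⁻¹ * p := ge_of_tendsto h2 h1
    calc γ = γ * 1 := (mul_one γ).symm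
      _ ≤ γ * (γ⁻¹ * p) := mul_le_mul_right h3 γ
      _ = p := by rw [← mul_assoc, ENNReal.mul_inv_cancel hγ0 hγtop, one_mul]
  -- conclude via continuity from above
  have hlim : Filter.limsup B Filter.atTop = ⋂ N, A N := by
    rw [limsup_eq_iInf_iSup_of_nat]
    simp only [hA_def, Set.iInf_eq_iInter, Set.iSup_eq_iUnion, ge_iff_le]
  rw [hlim, Directed.measure_iInter (fun N => (hAmeas N).nullMeasurableSet)
    (hAanti.directed_ge) ⟨0, measure_ne_top μ _⟩]
  exact le_iInf hA
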